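/- For a nonnegative vector w ∈ ℝ_{>0}^r and a nonnegative matrix H ∈ ℝ_{≥0}^{r×n}, the diagonal matrix K with entries K_{aa} = (w H H^T)_a / w_a satisfies: K − H H^T is positive semi-definite. -/

import Mathlib

open Matrix

/-- For `w` strictly positive and `H` nonnegative, the diagonal matrix `K` with
`K_{aa} = (w H Hᵀ)_a / w_a` satisfies `K - H Hᵀ` positive semi-definite. -/
theorem stmt_1 {r n : ℕ} (w : Fin r → ℝ) (hw : ∀ a, 0 < w a)
    (H : Matrix (Fin r) (Fin n) ℝ) (hH : ∀ i j, 0 ≤ H i j) :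
    (Matrix.diagonal (fun a => (w ᵥ* (H * Hᵀ)) a / w a) - H * Hᵀ).PosSemidef := by
  set A : Matrix (Fin r) (Fin r) ℝ := H * Hᵀ with hA
  have hAsymm : ∀ a b, A a b = A b a := by
    intro a b
    simp only [hA, mul_apply, transpose_apply]
    exact Finset.sum_congr rfl fun j _ => mul_comm _ _
  have hAnn : ∀ a b, 0 ≤ A a b := by
    intro a b
    simp only [hA, mul_apply, transpose_apply]
    exact Finset.sum_nonneg fun j _ => mul_nonneg (hH a j) (hH b j)
  refine Matrix.posSemidef_iff_dotProduct_mulVec.mpr ⟨?_, ?_⟩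
  · -- Hermitian
    ext a b
    simp only [Matrix.sub_apply, conjTranspose_apply, diagonal_apply, star_trivial]
    by_cases h : a = b
    · subst h; simp
    · simp [h, Ne.symm h, hAsymm b a]
  · intro x
    have hw' : ∀ a, w a ≠ 0 := fun a => (hw a).ne'
    have key : star x ⬝ᵥ ((Matrix.diagonal (fun a => (w ᵥ* A) a / w a) - A) *ᵥ x)
        = (1/2) * ∑ a, ∑ b, A a b * w a * w b * (x a / w a - x b / w b)^2 := by
      have expand : star x ⬝ᵥ ((Matrix.diagonal (fun a => (w ᵥ* A) a / w a) - A) *ᵥ x)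
          = ∑ a, ∑ b, A a b * (x a ^ 2 * w b / w a - x a * x b) := by
        simp only [dotProduct, mulVec, Matrix.sub_apply, diagonal_apply, vecMul, dotProduct,
          star_trivial, Pi.star_apply]
        refine Finset.sum_congr rfl fun a _ => ?_
        rw [Finset.mul_sum]
        have step : ∀ b ∈ Finset.univ, x a * (((if a = b then (∑ c, w c * A c a) / w a else 0) - A a b) * x b)
            = (if a = b then x a * ((∑ c, w c * A c a) / w a) * x b else 0) - x a * A a b * x b := by
          intro b _
          by_cases h : a = b <;> simp [h] <;> ring
        calc ∑ b, x a * (((if a = b then (∑ c, w c * A c a) / w a else 0) - A a b) * x b)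
            = ∑ b, ((if a = b then x a * ((∑ c, w c * A c a) / w a) * x b else 0) - x a * A a b * x b) :=
              Finset.sum_congr rfl step
          _ = x a * ((∑ c, w c * A c a) / w a) * x a - ∑ b, x a * A a b * x b := by
              rw [Finset.sum_sub_distrib, Finset.sum_ite_eq Finset.univ a
                (fun b => x a * ((∑ c, w c * A c a) / w a) * x b)]
              simp
          _ = ∑ b, A a b * (x a ^ 2 * w b / w a - x a * x b) := by
              rw [show x a * ((∑ c, w c * A c a) / w a) * x a
                  = ∑ c, x a * (w c * A c a / w a) * x a by
                rw [Finset.sum_div, Finset.mul_sum, Finset.sum_mul]]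
              rw [← Finset.sum_sub_distrib]
              refine Finset.sum_congr rfl fun b _ => ?_
              rw [hAsymm a b]
              field_simp [hw' a]
      rw [expand]
      have twoQ : (2:ℝ) * ∑ a, ∑ b, A a b * (x a ^ 2 * w b / w a - x a * x b)
          = ∑ a, ∑ b, A a b * w a * w b * (x a / w a - x b / w b)^2 := by
        have swap : ∑ a, ∑ b, A a b * (x a ^ 2 * w b / w a - x a * x b)
            = ∑ a, ∑ b, A a b * (x b ^ 2 * w a / w b - x b * x a) := by
          rw [Finset.sum_comm]
          refine Finset.sum_congr rfl fun a _ => Finset.sum_congr rfl fun b _ => ?_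
          rw [hAsymm a b]
        rw [two_mul]
        nth_rewrite 2 [swap]
        rw [← Finset.sum_add_distrib]
        refine Finset.sum_congr rfl fun a _ => ?_
        rw [← Finset.sum_add_distrib]
        refine Finset.sum_congr rfl fun b _ => ?_
        field_simp [hw' a, hw' b]
        ring
      linarith [twoQ]
    rw [key]
    have : 0 ≤ ∑ a, ∑ b, A a b * w a * w b * (x a / w a - x b / w b)^2 :=
      Finset.sum_nonneg fun a _ => Finset.sum_nonneg fun b _ =>
        mul_nonneg (mul_nonneg (mul_nonneg (hAnn a b) (hw a).le) (hw b).le) (sq_nonneg _)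
    linarith
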